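/- arXiv:2203.09667 — 10 statements merged into one kernel-verified Lean document; each statement's English description precedes it below -/
import Mathlib

section
/- In a de Vries algebra, if F is a concordant filter and a ∉ F, then there exists a concordant filter G extending F such that no concordant filter extending G contains a. -/
/-- A de Vries algebra structure on a complete Boolean algebra `B`:
a subordination relation `prec` satisfying axioms (A1)-(A7). -/
structure DeVries (B : Type*) [CompleteBooleanAlgebra B] where
  prec : B → B → Prop
  A1 : prec ⊤ ⊤
  A2 : ∀ {a b : B}, prec a b → a ≤ b
  A3 : ∀ {a b c d : B}, a ≤ b → prec b c → c ≤ d → prec a d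
  A4 : ∀ {a b c : B}, prec a b → prec a c → prec a (b ⊓ c)
  A5 : ∀ {a b : B}, prec a b → prec bᶜ aᶜ
  A6 : ∀ {a c : B}, prec a c → ∃ b, prec a b ∧ prec b c
  A7 : ∀ {a : B}, a ≠ ⊥ → ∃ b, b ≠ ⊥ ∧ prec b a

variable {B : Type*} [CompleteBooleanAlgebra B]

/-- A (proper) filter on `B`, as a set. -/
def IsProperFilter (F : Set B) : Prop :=
  ⊤ ∈ F ∧ ⊥ ∉ F ∧ (∀ a b : B, a ∈ F → a ≤ b → b ∈ F) ∧
    (∀ a b : B, a ∈ F → b ∈ F → a ⊓ b ∈ F)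

/-- A concordant filter: a proper filter in which every element has a ≺-predecessor. -/
def Concordant (V : DeVries B) (F : Set B) : Prop :=
  IsProperFilter F ∧ ∀ a ∈ F, ∃ b ∈ F, V.prec b a

theorem stmt2 (V : DeVries B) (F : Set B) (hF : Concordant V F) (a : B) (ha : a ∉ F) :
    ∃ G : Set B, Concordant V G ∧ F ⊆ G ∧
      ∀ H : Set B, Concordant V H → G ⊆ H → a ∉ H := by
  classical
  -- The collection of concordant filters extending F none of whose elements lie below a.
  set T : Set (Set B) := {G | Concordant V G ∧ F ⊆ G ∧ ∀ g ∈ G, ¬ g ≤ a} with hT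
  have hFT : F ∈ T := by
    refine ⟨hF, le_refl _, ?_⟩
    intro g hg hle
    exact ha (hF.1.2.2.1 g a hg hle)
  -- chains have upper bounds
  obtain ⟨G, hFG, hGT, hGmax⟩ :
      ∃ G, F ⊆ G ∧ G ∈ T ∧ ∀ G' ∈ T, G ⊆ G' → G' = G := by
    have hchainub : ∀ c ⊆ T, IsChain (· ⊆ ·) c → c.Nonempty →
        ∃ ub ∈ T, ∀ s ∈ c, s ⊆ ub := by
      rintro c hcT hchain ⟨x, hx⟩
      refine ⟨⋃₀ c, ⟨⟨⟨?_, ?_, ?_, ?_⟩, ?_⟩, ?_, ?_⟩, fun s hs => Set.subset_sUnion_of_mem hs⟩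
      · exact ⟨x, hx, (hcT hx).1.1.1⟩
      · rintro ⟨s, hs, hbot⟩
        exact (hcT hs).1.1.2.1 hbot
      · rintro p q ⟨s, hs, hp⟩ hle
        exact ⟨s, hs, (hcT hs).1.1.2.2.1 p q hp hle⟩
      · rintro p q ⟨s, hs, hp⟩ ⟨t, ht, hq⟩
        rcases hchain.total hs ht with h | h
        · exact ⟨t, ht, (hcT ht).1.1.2.2.2 p q (h hp) hq⟩
        · exact ⟨s, hs, (hcT hs).1.1.2.2.2 p q hp (h hq)⟩
      · rintro p ⟨s, hs, hp⟩
        obtain ⟨b, hb, hpb⟩ := (hcT hs).1.2 p hp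
        exact ⟨b, ⟨s, hs, hb⟩, hpb⟩
      · exact Set.Subset.trans (hcT hx).2.1 (Set.subset_sUnion_of_mem hx)
      · rintro g ⟨s, hs, hg⟩
        exact (hcT hs).2.2 g hg
    obtain ⟨G, hFG, hmax⟩ := zorn_subset_nonempty T hchainub F hFT
    exact ⟨G, hFG, hmax.1, fun G' hG' hGG' => (hmax.eq_of_le hG' hGG').symm⟩
  obtain ⟨⟨hGfilt, hGconc⟩, _, hGa⟩ := hGT
  refine ⟨G, ⟨hGfilt, hGconc⟩, hFG, ?_⟩
  intro H hH hGH haH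
  -- H concordant, G ⊆ H, a ∈ H : derive a contradiction.
  obtain ⟨b, hbH, hba⟩ := hH.2 a haH
  -- a ≺-chain : aᶜ ≺ ... ≺ m (n+1) ≺ m n ≺ ... ≺ m 0 = bᶜ
  have hab : V.prec aᶜ bᶜ := V.A5 hba
  have step : ∀ c : B, V.prec aᶜ c → {d : B // V.prec aᶜ d ∧ V.prec d c} := by
    intro c hc
    exact ⟨Classical.choose (V.A6 hc), Classical.choose_spec (V.A6 hc)⟩
  let m : ℕ → {c : B // V.prec aᶜ c} := fun n =>
    Nat.rec ⟨bᶜ, hab⟩ (fun _ p => ⟨(step p.1 p.2).1, (step p.1 p.2).2.1⟩) n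
  have hmstep : ∀ n : ℕ, V.prec (m (n + 1)).1 (m n).1 := by
    intro n
    exact (step (m n).1 (m n).2).2.2
  have hmle : ∀ n k : ℕ, n ≤ k → (m k).1 ≤ (m n).1 := by
    intro n k hnk
    induction k with
    | zero => simp_all
    | succ k ih =>
      rcases Nat.lt_or_ge n (k + 1) with h | h
      · exact le_trans (V.A2 (hmstep k)) (ih (Nat.lt_succ_iff.mp h))
      · have : n = k + 1 := le_antisymm hnk h
        simp [this]
  have hacm : ∀ n : ℕ, aᶜ ≤ (m n).1 := fun n => V.A2 (m n).2
  -- the filter generated by G together with the chain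
  set G₂ : Set B := {y | ∃ g ∈ G, ∃ n : ℕ, g ⊓ (m n).1 ≤ y} with hG₂
  have hGG₂ : G ⊆ G₂ := by
    intro g hg
    exact ⟨g, hg, 0, inf_le_left⟩
  have hG₂a : ∀ y ∈ G₂, ¬ y ≤ a := by
    rintro y ⟨g, hg, n, hle⟩ hya
    apply hGa g hg
    have h1 : g ⊓ aᶜ ≤ g ⊓ (m n).1 := inf_le_inf_left g (hacm n)
    have h2 : g ⊓ aᶜ ≤ a := le_trans h1 (le_trans hle hya)
    have h3 : g ⊓ aᶜ ≤ a ⊓ aᶜ := le_inf h2 inf_le_right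
    have h4 : g ⊓ aᶜ = ⊥ := le_bot_iff.mp (by simpa using h3)
    have : g ≤ a := by
      have := le_of_inf_eq (a := g) (b := a) ?_
      · exact this
      · have : g = g ⊓ (a ⊔ aᶜ) := by simp
        rw [inf_comm]
        calc a ⊓ g = (g ⊓ a) ⊔ ⊥ := by rw [inf_comm]; simp
          _ = (g ⊓ a) ⊔ (g ⊓ aᶜ) := by rw [h4]
          _ = g ⊓ (a ⊔ aᶜ) := (inf_sup_left g a aᶜ).symm
          _ = g := by simp
    exact this
  have hG₂T : G₂ ∈ T := by
    refine ⟨⟨⟨?_, ?_, ?_, ?_⟩, ?_⟩, Set.Subset.trans hFG hGG₂, hG₂a⟩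
    · exact hGG₂ hGfilt.1
    · rintro ⟨g, hg, n, hle⟩
      exact hG₂a ⊥ ⟨g, hg, n, hle⟩ bot_le
    · rintro p q ⟨g, hg, n, hle⟩ hpq
      exact ⟨g, hg, n, le_trans hle hpq⟩
    · rintro p q ⟨g, hg, n, hle⟩ ⟨g', hg', k, hle'⟩
      refine ⟨g ⊓ g', hGfilt.2.2.2 g g' hg hg', max n k, ?_⟩
      have h1 : g ⊓ g' ⊓ (m (max n k)).1 ≤ g ⊓ (m n).1 :=
        le_inf (le_trans inf_le_left inf_le_left)
          (le_trans inf_le_right (hmle n (max n k) (le_max_left n k)))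
      have h2 : g ⊓ g' ⊓ (m (max n k)).1 ≤ g' ⊓ (m k).1 :=
        le_inf (le_trans inf_le_left inf_le_right)
          (le_trans inf_le_right (hmle k (max n k) (le_max_right n k)))
      exact le_inf (le_trans h1 hle) (le_trans h2 hle')
    · rintro y ⟨g, hg, n, hle⟩
      obtain ⟨g', hg', hg'g⟩ := hGconc g hg
      refine ⟨g' ⊓ (m (n + 1)).1, ⟨g', hg', n + 1, le_refl _⟩, ?_⟩
      have p1 : V.prec (g' ⊓ (m (n + 1)).1) g := V.A3 inf_le_left hg'g (le_refl _)
      have p2 : V.prec (g' ⊓ (m (n + 1)).1) (m n).1 :=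
        V.A3 inf_le_right (hmstep n) (le_refl _)
      exact V.A3 (le_refl _) (V.A4 p1 p2) hle
  -- maximality: G₂ = G, so bᶜ ∈ G ⊆ H; but b ∈ H, contradiction
  have hG₂G : G₂ = G := hGmax G₂ hG₂T hGG₂
  have hbcG : bᶜ ∈ G := by
    rw [← hG₂G]
    exact ⟨⊤, hGfilt.1, 0, inf_le_right⟩
  have hbotH : (⊥ : B) ∈ H := by
    have := hH.1.2.2.2 b bᶜ hbH (hGH hbcG)
    simpa using this
  exact hH.1.2.1 hbotH
end

section
/- In a de Vries algebra, for every nonzero element a there exists a concordant filter containing a; consequently, the map a ↦ â = {F concordant : a ∈ F} is injective and â ⊆ b̂ iff a ≤ b. -/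
variable {B : Type*} [CompleteBooleanAlgebra B]

/-- The dual filter space: the set of concordant filters. -/
def SV (V : DeVries B) : Type _ := {F : Set B // Concordant V F}

/-- Basic open set `â = {F : a ∈ F}`. -/
def hatt (V : DeVries B) (a : B) : Set (SV V) := {F : SV V | a ∈ F.1}

/-- The Stone-like topology on `SV V`, generated by the sets `â`. -/
instance instTopSV (V : DeVries B) : TopologicalSpace (SV V) :=
  TopologicalSpace.generateFrom {U : Set (SV V) | ∃ a : B, U = hatt V a}

/-- Downward closure under the inclusion (specialization) order of filters. -/
def dclF (V : DeVries B) (A : Set (SV V)) : Set (SV V) :=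
  {F : SV V | ∃ G ∈ A, F.1 ⊆ G.1}

/-- Interior in the upset topology of the inclusion order: all extensions lie in `A`. -/
def upIntF (V : DeVries B) (A : Set (SV V)) : Set (SV V) :=
  {F : SV V | ∀ G : SV V, F.1 ⊆ G.1 → G ∈ A}

theorem stmt3 (V : DeVries B) :
    (∀ a : B, a ≠ ⊥ → ∃ F : Set B, Concordant V F ∧ a ∈ F) ∧
    Function.Injective (hatt V) ∧
    (∀ a b : B, hatt V a ⊆ hatt V b ↔ a ≤ b) := by
  have main : ∀ a : B, a ≠ ⊥ → ∃ F : Set B, Concordant V F ∧ a ∈ F := by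
    intro a ha
    let f : ℕ → {x : B // x ≠ ⊥} := fun n =>
      Nat.rec ⟨a, ha⟩ (fun _ p => ⟨(V.A7 p.2).choose, (V.A7 p.2).choose_spec.1⟩) n
    have hprec : ∀ n, V.prec (f (n+1)).1 (f n).1 := fun n => (V.A7 (f n).2).choose_spec.2
    have hmono : ∀ n, (f (n+1)).1 ≤ (f n).1 := fun n => V.A2 (hprec n)
    have hle : ∀ m n, m ≤ n → (f n).1 ≤ (f m).1 := by
      intro m n h
      induction h with
      | refl => exact le_rfl
      | step _ ih => exact le_trans (hmono _) ih
    refine ⟨{c | ∃ n, (f n).1 ≤ c}, ⟨⟨⟨0, le_top⟩, ?_, ?_, ?_⟩, ?_⟩, ⟨0, le_rfl⟩⟩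
    · rintro ⟨n, hn⟩
      exact (f n).2 (le_bot_iff.mp hn)
    · rintro c d ⟨n, hn⟩ hcd
      exact ⟨n, hn.trans hcd⟩
    · rintro c d ⟨m, hm⟩ ⟨n, hn⟩
      exact ⟨max m n, le_inf ((hle m _ (le_max_left m n)).trans hm)
        ((hle n _ (le_max_right m n)).trans hn)⟩
    · rintro c ⟨n, hn⟩
      exact ⟨(f (n+1)).1, ⟨n+1, le_rfl⟩, V.A3 le_rfl (hprec n) hn⟩
  have hiff : ∀ a b : B, hatt V a ⊆ hatt V b ↔ a ≤ b := by
    intro a b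
    constructor
    · intro hsub
      by_contra hab
      have hne : a ⊓ bᶜ ≠ ⊥ := by
        intro h
        exact hab (sdiff_eq_bot_iff.mp (by rwa [sdiff_eq]))
      obtain ⟨F, hF, hmem⟩ := main _ hne
      have haF : a ∈ F := hF.1.2.2.1 _ _ hmem inf_le_left
      have hbF : b ∈ F := hsub (show (⟨F, hF⟩ : SV V) ∈ hatt V a from haF)
      have hbcF : bᶜ ∈ F := hF.1.2.2.1 _ _ hmem inf_le_right
      have : b ⊓ bᶜ ∈ F := hF.1.2.2.2 _ _ hbF hbcF
      rw [inf_compl_eq_bot] at this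
      exact hF.1.2.1 this
    · intro hab F haF
      exact F.2.1.2.2.1 _ _ haF hab
  refine ⟨main, ?_, hiff⟩
  intro a b h
  exact le_antisymm ((hiff a b).mp h.le) ((hiff b a).mp h.ge)
end

section
/- Let V be a de Vries algebra and S_V its set of concordant filters with the Stone-like topology generated by the sets â = {F : a ∈ F}. Then for every a ∈ V, the topological complement of the closure of â equals the set ¬a-hat; i.e., a concordant filter F lies in the closure of â iff ¬a ∉ F. -/
variable {B : Type*} [CompleteBooleanAlgebra B]

/-- Every nonzero element lies in some concordant filter. -/
lemma exists_concordant_mem (V : DeVries B) {c : B} (hc : c ≠ ⊥) :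
    ∃ G : Set B, Concordant V G ∧ c ∈ G := by
  choose f hf1 hf2 using fun (x : {x : B // x ≠ ⊥}) => V.A7 x.2
  let g : ℕ → {x : B // x ≠ ⊥} :=
    fun n => Nat.rec ⟨c, hc⟩ (fun _ p => ⟨f p, hf1 p⟩) n
  have hstep : ∀ n, V.prec (g (n + 1)).1 (g n).1 := fun n => hf2 (g n)
  have hle : ∀ n, (g (n + 1)).1 ≤ (g n).1 := fun n => V.A2 (hstep n)
  have hanti : ∀ m n, m ≤ n → (g n).1 ≤ (g m).1 := by
    intro m n h
    induction n with
    | zero => simp_all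
    | succ k ih =>
      rcases Nat.lt_or_ge m (k + 1) with h' | h'
      · exact le_trans (hle k) (ih (Nat.lt_succ_iff.mp h'))
      · have : m = k + 1 := le_antisymm h h'
        subst this; exact le_rfl
  refine ⟨{x | ∃ n, (g n).1 ≤ x}, ⟨⟨⟨0, le_top⟩, ?_, ?_, ?_⟩, ?_⟩, ⟨0, le_rfl⟩⟩
  · rintro ⟨n, hn⟩
    exact (g n).2 (le_bot_iff.mp hn)
  · rintro x y ⟨n, hn⟩ hxy
    exact ⟨n, hn.trans hxy⟩
  · rintro x y ⟨n, hn⟩ ⟨m, hm⟩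
    exact ⟨max n m, le_inf ((hanti n _ (le_max_left n m)).trans hn)
      ((hanti m _ (le_max_right n m)).trans hm)⟩
  · rintro x ⟨n, hn⟩
    exact ⟨(g (n + 1)).1, ⟨n + 1, le_rfl⟩, V.A3 le_rfl (hstep n) hn⟩

lemma hatt_basis (V : DeVries B) :
    TopologicalSpace.IsTopologicalBasis {U : Set (SV V) | ∃ a : B, U = hatt V a} := by
  refine ⟨?_, ?_, rfl⟩
  · rintro U ⟨b, rfl⟩ W ⟨d, rfl⟩ F ⟨hb, hd⟩
    refine ⟨hatt V (b ⊓ d), ⟨b ⊓ d, rfl⟩, F.2.1.2.2.2 b d hb hd, ?_⟩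
    intro G hG
    exact ⟨G.2.1.2.2.1 _ _ hG inf_le_left, G.2.1.2.2.1 _ _ hG inf_le_right⟩
  · apply Set.eq_univ_of_forall
    intro F
    exact Set.mem_sUnion.mpr ⟨hatt V ⊤, ⟨⊤, rfl⟩, F.2.1.1⟩

theorem stmt4 (V : DeVries B) (a : B) :
    (closure (hatt V a))ᶜ = hatt V aᶜ ∧
    ∀ F : SV V, F ∈ closure (hatt V a) ↔ aᶜ ∉ F.1 := by
  have key : ∀ F : SV V, F ∈ closure (hatt V a) ↔ aᶜ ∉ F.1 := by
    intro F
    rw [(hatt_basis V).mem_closure_iff]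
    constructor
    · intro h hac
      obtain ⟨G, hG1, hG2⟩ := h (hatt V aᶜ) ⟨aᶜ, rfl⟩ hac
      have : aᶜ ⊓ a ∈ G.1 := G.2.1.2.2.2 _ _ hG1 hG2
      rw [compl_inf_self] at this
      exact G.2.1.2.1 this
    · rintro hac U ⟨b, rfl⟩ hb
      have hne : b ⊓ a ≠ ⊥ := by
        intro h
        have : b ≤ aᶜ := le_compl_iff_disjoint_right.mpr (disjoint_iff.mpr h)
        exact hac (F.2.1.2.2.1 _ _ hb this)
      obtain ⟨G, hG, hcG⟩ := exists_concordant_mem V hne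
      exact ⟨⟨G, hG⟩, hG.1.2.2.1 _ _ hcG inf_le_left, hG.1.2.2.1 _ _ hcG inf_le_right⟩
  refine ⟨?_, key⟩
  ext F
  rw [Set.mem_compl_iff, key F, not_not]
  rfl
end

section
/- Let V be a de Vries algebra with dual filter space S_V. For every a ∈ V, the set â is order-regular open: the interior (in the upset topology of the specialization order, which is inclusion of filters) of the downward closure of â equals â. -/
variable {B : Type*} [CompleteBooleanAlgebra B]

/-- An infinite interpolated `≺`-chain below `v`, all above `u`. -/
lemma DeVries.chain_exists (V : DeVries B) {u v : B} (h : V.prec u v) :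
    ∃ d : ℕ → B, d 0 ≤ v ∧ (∀ i, V.prec u (d i)) ∧ ∀ i, V.prec (d (i + 1)) (d i) := by
  classical
  have g : ∀ x : {x : B // V.prec u x}, {y : B // V.prec u y ∧ V.prec y x.1} :=
    fun x => Classical.indefiniteDescription _ (V.A6 x.2)
  let d' : ℕ → {x : B // V.prec u x} := fun n =>
    Nat.rec (⟨(g ⟨v, h⟩).1, (g ⟨v, h⟩).2.1⟩) (fun _ p => ⟨(g p).1, (g p).2.1⟩) n
  refine ⟨fun n => (d' n).1, V.A2 (g ⟨v, h⟩).2.2, fun i => (d' i).2, fun i => (g (d' i)).2.2⟩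

theorem stmt5 (V : DeVries B) (a : B) :
    upIntF V (dclF V (hatt V a)) = hatt V a := by
  classical
  ext F
  constructor
  · intro hF
    by_contra ha
    -- the collection of concordant filters extending `F` and avoiding `a`
    set S : Set (Set B) := {G | Concordant V G ∧ F.1 ⊆ G ∧ a ∉ G} with hS
    have hFS : F.1 ∈ S := ⟨F.2, subset_rfl, ha⟩
    have hchain : ∀ c ⊆ S, IsChain (· ⊆ ·) c → c.Nonempty →
        ∃ ub ∈ S, ∀ s ∈ c, s ⊆ ub := by
      intro c hcS hc ⟨t, ht⟩
      refine ⟨⋃₀ c, ?_, fun s hs => Set.subset_sUnion_of_mem hs⟩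
      have mem_of : ∀ x, x ∈ ⋃₀ c → ∃ s ∈ c, x ∈ s := by
        intro x hx; exact hx
      refine ⟨⟨⟨⟨t, ht, (hcS ht).1.1.1⟩, ?_, ?_, ?_⟩, ?_⟩, ?_, ?_⟩
      · rintro ⟨s, hs, hbot⟩; exact (hcS hs).1.1.2.1 hbot
      · rintro x y ⟨s, hs, hx⟩ hxy
        exact ⟨s, hs, (hcS hs).1.1.2.2.1 x y hx hxy⟩
      · rintro x y ⟨s, hs, hx⟩ ⟨s', hs', hy⟩
        rcases hc.total hs hs' with hss | hss
        · exact ⟨s', hs', (hcS hs').1.1.2.2.2 x y (hss hx) hy⟩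
        · exact ⟨s, hs, (hcS hs).1.1.2.2.2 x y hx (hss hy)⟩
      · rintro x ⟨s, hs, hx⟩
        obtain ⟨b, hb, hbx⟩ := (hcS hs).1.2 x hx
        exact ⟨b, ⟨s, hs, hb⟩, hbx⟩
      · exact fun x hx => ⟨t, ht, (hcS ht).2.1 hx⟩
      · rintro ⟨s, hs, haa⟩; exact (hcS hs).2.2 haa
    obtain ⟨G, hFG, hGmax⟩ := zorn_subset_nonempty S hchain F.1 hFS
    have hGconc : Concordant V G := hGmax.1.1
    have haG : a ∉ G := hGmax.1.2.2
    obtain ⟨⟨hGtop, hGbot, hGup, hGmeet⟩, hGcon⟩ := hGconc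
    -- apply the hypothesis to the maximal G
    obtain ⟨H, hHa, hGH⟩ := hF ⟨G, hGmax.1.1⟩ hFG
    obtain ⟨⟨hHtop, hHbot, hHup, hHmeet⟩, hHcon⟩ := H.2
    -- a predecessor of a inside H
    obtain ⟨c, hcH, hca⟩ := hHcon a hHa
    -- interpolated chain below cᶜ, above aᶜ
    obtain ⟨d, hd0, hdu, hdd⟩ := V.chain_exists (V.A5 hca)
    have hdle : ∀ i, aᶜ ≤ d i := fun i => V.A2 (hdu i)
    have hdmono : ∀ i j, i ≤ j → d j ≤ d i := by
      intro i j hij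
      induction j with
      | zero => simp_all
      | succ k ih =>
        rcases Nat.lt_or_ge i (k + 1) with hlt | hge
        · exact (V.A2 (hdd k)).trans (ih (Nat.lt_succ_iff.mp hlt))
        · have : i = k + 1 := le_antisymm hij hge
          simp [this]
    -- the enlarged filter
    set G' : Set B := {x | ∃ b ∈ G, ∃ i, b ⊓ d i ≤ x} with hG'
    have hGsubG' : G ⊆ G' := fun b hb => ⟨b, hb, 0, inf_le_left⟩
    have hbot' : ∀ b ∈ G, ∀ i, ¬ b ⊓ d i ≤ a := by
      intro b hb i hle
      have h1 : b ⊓ aᶜ ≤ a ⊓ aᶜ :=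
        le_inf ((inf_le_inf_left b (hdle i)).trans hle) inf_le_right
      rw [inf_compl_eq_bot] at h1
      have hba : b ≤ a := by
        have h2 : b \ a = ⊥ := le_bot_iff.mp (by rw [sdiff_eq]; exact h1)
        exact sdiff_eq_bot_iff.mp h2
      exact haG (hGup b a hb hba)
    have hG'S : G' ∈ S := by
      refine ⟨⟨⟨⟨⊤, hGtop, 0, le_top⟩, ?_, ?_, ?_⟩, ?_⟩, ?_, ?_⟩
      · rintro ⟨b, hb, i, hle⟩
        exact hbot' b hb i (hle.trans bot_le)
      · rintro x y ⟨b, hb, i, hle⟩ hxy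
        exact ⟨b, hb, i, hle.trans hxy⟩
      · rintro x y ⟨b, hb, i, hle⟩ ⟨b', hb', j, hle'⟩
        refine ⟨b ⊓ b', hGmeet b b' hb hb', max i j, le_inf ?_ ?_⟩
        · exact le_trans (inf_le_inf (inf_le_left) (hdmono i _ (le_max_left i j))) hle
        · exact le_trans (inf_le_inf (inf_le_right) (hdmono j _ (le_max_right i j))) hle'
      · rintro x ⟨b, hb, i, hle⟩
        obtain ⟨b', hb', hb'b⟩ := hGcon b hb
        refine ⟨b' ⊓ d (i + 1), ⟨b', hb', i + 1, le_rfl⟩, ?_⟩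
        have h1 : V.prec (b' ⊓ d (i + 1)) b := V.A3 inf_le_left hb'b le_rfl
        have h2 : V.prec (b' ⊓ d (i + 1)) (d i) := V.A3 inf_le_right (hdd i) le_rfl
        exact V.A3 le_rfl (V.A4 h1 h2) hle
      · exact fun x hx => hGsubG' (hGmax.1.2.1 hx)
      · rintro ⟨b, hb, i, hle⟩
        exact hbot' b hb i hle
    have hG'G : G' = G := le_antisymm (hGmax.2 hG'S hGsubG') hGsubG'
    have hccG : cᶜ ∈ G := hG'G ▸ (⟨⊤, hGtop, 0, le_trans inf_le_right hd0⟩ : cᶜ ∈ G')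
    have : (⊥ : B) ∈ H.1 := by
      have := hHmeet c cᶜ hcH (hGH hccG)
      rwa [inf_compl_eq_bot] at this
    exact hHbot this
  · intro ha G hFG
    exact ⟨G, hFG ha, subset_rfl⟩
end

section
/- Let V be a de Vries algebra with dual filter space S_V. Then every regular open subset of S_V is of the form â for some a ∈ V; hence the map a ↦ â is a Boolean isomorphism from V onto the Boolean algebra of regular open subsets of S_V. -/
variable {B : Type*} [CompleteBooleanAlgebra B]

/-- Regular open: `U` equals the interior of its closure. -/
def RegOpen {X : Type*} [TopologicalSpace X] (U : Set X) : Prop :=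
  interior (closure U) = U

section Aux

variable (V : DeVries B)

/-- Every nonzero element lies in some concordant filter. -/
lemma dv_exists_mem {c : B} (hc : c ≠ ⊥) : ∃ F : SV V, c ∈ F.1 := by
  let d : ℕ → {x : B // x ≠ ⊥} := fun n =>
    Nat.rec ⟨c, hc⟩ (fun _ p => ⟨(V.A7 p.2).choose, (V.A7 p.2).choose_spec.1⟩) n
  have hprec : ∀ n, V.prec (d (n + 1)).1 (d n).1 := fun n => (V.A7 (d n).2).choose_spec.2
  have hle : ∀ n, (d (n + 1)).1 ≤ (d n).1 := fun n => V.A2 (hprec n)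
  have hanti : ∀ m n, m ≤ n → (d n).1 ≤ (d m).1 := by
    intro m n h
    induction h with
    | refl => exact le_rfl
    | step _ ih => exact (hle _).trans ih
  have hconc : Concordant V {x | ∃ n, (d n).1 ≤ x} := by
    constructor
    · refine ⟨⟨0, le_top⟩, ?_, ?_, ?_⟩
      · rintro ⟨n, hn⟩
        exact (d n).2 (le_bot_iff.mp hn)
      · rintro a b ⟨n, hn⟩ hab
        exact ⟨n, hn.trans hab⟩
      · rintro a b ⟨m, hm⟩ ⟨n, hn⟩
        exact ⟨max m n, le_inf ((hanti m _ (le_max_left m n)).trans hm)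
          ((hanti n _ (le_max_right m n)).trans hn)⟩
    · rintro a ⟨n, hn⟩
      exact ⟨(d (n + 1)).1, ⟨n + 1, le_rfl⟩, V.A3 le_rfl (hprec n) hn⟩
  exact ⟨⟨_, hconc⟩, ⟨0, le_rfl⟩⟩

lemma dv_hatt_eq_empty {c : B} (h : hatt V c = ∅) : c = ⊥ := by
  by_contra hc
  obtain ⟨F, hF⟩ := dv_exists_mem V hc
  exact absurd (h ▸ hF : F ∈ (∅ : Set (SV V))) (Set.notMem_empty F)

lemma dv_isOpen_hatt (a : B) : IsOpen (hatt V a) :=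
  TopologicalSpace.GenerateOpen.basic _ ⟨a, rfl⟩

lemma dv_open_basis {U : Set (SV V)} (hU : IsOpen U) :
    ∀ F : SV V, F ∈ U → ∃ b ∈ F.1, hatt V b ⊆ U := by
  have hU' : TopologicalSpace.GenerateOpen {W : Set (SV V) | ∃ a, W = hatt V a} U := hU
  induction hU' with
  | basic W hW =>
      obtain ⟨a, rfl⟩ := hW
      exact fun F hF => ⟨a, hF, subset_rfl⟩
  | univ => exact fun F _ => ⟨⊤, F.2.1.1, Set.subset_univ _⟩
  | inter W₁ W₂ h₁ h₂ ih₁ ih₂ =>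
      intro F hF
      obtain ⟨b₁, hb₁, hs₁⟩ := ih₁ h₁ F hF.1
      obtain ⟨b₂, hb₂, hs₂⟩ := ih₂ h₂ F hF.2
      refine ⟨b₁ ⊓ b₂, F.2.1.2.2.2 _ _ hb₁ hb₂, fun G hG => ?_⟩
      exact ⟨hs₁ (G.2.1.2.2.1 _ _ hG inf_le_left), hs₂ (G.2.1.2.2.1 _ _ hG inf_le_right)⟩
  | sUnion S hSo ih =>
      rintro F ⟨W, hW, hFW⟩
      obtain ⟨b, hb, hs⟩ := ih W hW (hSo W hW) F hFW
      exact ⟨b, hb, hs.trans (Set.subset_sUnion_of_mem hW)⟩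

lemma dv_closure_compl (a : B) : (closure (hatt V a))ᶜ = hatt V aᶜ := by
  ext F
  constructor
  · intro hF
    rw [Set.mem_compl_iff, mem_closure_iff] at hF
    push_neg at hF
    obtain ⟨O, hO, hFO, hdisj⟩ := hF
    obtain ⟨b, hb, hs⟩ := dv_open_basis V hO F hFO
    have hab : a ⊓ b = ⊥ := by
      by_contra h
      obtain ⟨G, hG⟩ := dv_exists_mem V h
      exact Set.eq_empty_iff_forall_notMem.mp hdisj G ⟨hs (G.2.1.2.2.1 _ _ hG inf_le_right), G.2.1.2.2.1 _ _ hG inf_le_left⟩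
    have hba : b ≤ aᶜ := le_compl_iff_disjoint_left.mpr (disjoint_iff.mpr hab)
    exact F.2.1.2.2.1 _ _ hb hba
  · intro hF
    rw [Set.mem_compl_iff, mem_closure_iff]
    push_neg
    refine ⟨hatt V aᶜ, dv_isOpen_hatt V aᶜ, hF, Set.eq_empty_iff_forall_notMem.mpr ?_⟩
    rintro G ⟨hG₁, hG₂⟩
    have : aᶜ ⊓ a ∈ G.1 := G.2.1.2.2.2 _ _ hG₁ hG₂
    rw [compl_inf_self] at this
    exact G.2.1.2.1 this

lemma dv_regOpen_hatt (a : B) : RegOpen (hatt V a) := by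
  unfold RegOpen
  have h1 : closure (hatt V a) = (hatt V aᶜ)ᶜ := by
    rw [← dv_closure_compl V a, compl_compl]
  rw [h1, interior_compl, dv_closure_compl V aᶜ, compl_compl]

lemma dv_le_of_hatt_subset {a b : B} (h : hatt V a ⊆ hatt V b) : a ≤ b := by
  by_contra hab
  have hne : a ⊓ bᶜ ≠ ⊥ := by
    intro h0
    rw [← sdiff_eq] at h0
    exact hab (sdiff_eq_bot_iff.mp h0)
  obtain ⟨F, hF⟩ := dv_exists_mem V hne
  have ha : a ∈ F.1 := F.2.1.2.2.1 _ _ hF inf_le_left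
  have hbc : bᶜ ∈ F.1 := F.2.1.2.2.1 _ _ hF inf_le_right
  have hb : b ∈ F.1 := h ha
  have : b ⊓ bᶜ ∈ F.1 := F.2.1.2.2.2 _ _ hb hbc
  rw [inf_compl_self] at this
  exact F.2.1.2.1 this

end Aux

theorem stmt6 (V : DeVries B) :
    (∀ U : Set (SV V), RegOpen U → ∃ a : B, U = hatt V a) ∧
    (∀ a : B, RegOpen (hatt V a)) ∧
    Function.Injective (hatt V) ∧
    (∀ a b : B, hatt V (a ⊓ b) = hatt V a ∩ hatt V b) ∧
    (∀ a : B, hatt V aᶜ = (closure (hatt V a))ᶜ) ∧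
    hatt V ⊥ = ∅ ∧ hatt V ⊤ = Set.univ := by
  refine ⟨?_, dv_regOpen_hatt V, ?_, ?_, ?_, ?_, ?_⟩
  · -- every regular open is some hatt
    intro U hU
    have hUopen : IsOpen U := by rw [← hU]; exact isOpen_interior
    set S : Set B := {b | hatt V b ⊆ U} with hS
    refine ⟨sSup S, Set.Subset.antisymm ?_ ?_⟩
    · intro F hF
      obtain ⟨b, hb, hs⟩ := dv_open_basis V hUopen F hF
      exact F.2.1.2.2.1 b _ hb (le_sSup hs)
    · have hsub : hatt V (sSup S) ⊆ closure U := by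
        intro F hF
        rw [mem_closure_iff]
        intro O hO hFO
        obtain ⟨c, hc, hsO⟩ := dv_open_basis V hO F hFO
        have hd : sSup S ⊓ c ∈ F.1 := F.2.1.2.2.2 _ _ hF hc
        have hdne : sSup S ⊓ c ≠ ⊥ := fun h => F.2.1.2.1 (h ▸ hd)
        have hex : ∃ b ∈ S, b ⊓ c ≠ ⊥ := by
          by_contra h
          push_neg at h
          apply hdne
          rw [sSup_inf_eq]
          exact le_bot_iff.mp (iSup₂_le fun b hb => le_of_eq (h b hb))
        obtain ⟨b, hbS, hbc⟩ := hex
        obtain ⟨G, hG⟩ := dv_exists_mem V hbc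
        exact ⟨G, hsO (G.2.1.2.2.1 _ _ hG inf_le_right), hbS (G.2.1.2.2.1 _ _ hG inf_le_left)⟩
      calc hatt V (sSup S) = interior (hatt V (sSup S)) := (dv_isOpen_hatt V _).interior_eq.symm
        _ ⊆ interior (closure U) := interior_mono hsub
        _ = U := hU
  · -- injective
    intro a b h
    exact le_antisymm (dv_le_of_hatt_subset V h.le) (dv_le_of_hatt_subset V h.ge)
  · -- meets
    intro a b
    ext F
    constructor
    · intro hF
      exact ⟨F.2.1.2.2.1 _ _ hF inf_le_left, F.2.1.2.2.1 _ _ hF inf_le_right⟩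
    · rintro ⟨h1, h2⟩
      exact F.2.1.2.2.2 _ _ h1 h2
  · -- complements
    intro a
    exact (dv_closure_compl V a).symm
  · -- bot
    ext F
    simp only [hatt, Set.mem_setOf_eq, Set.mem_empty_iff_false, iff_false]
    exact F.2.1.2.1
  · -- top
    ext F
    simp only [hatt, Set.mem_setOf_eq, Set.mem_univ, iff_true]
    exact F.2.1.1
end

section
/- Let V be a de Vries algebra with dual filter space S_V. For any a, b ∈ V: a ≺ b if and only if the closure of â is contained in the downward closure (with respect to the specialization/inclusion order) of b̂. -/
variable {B : Type*} [CompleteBooleanAlgebra B]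

lemma prec_bot' (V : DeVries B) (b : B) : V.prec ⊥ b := by
  have h := V.A5 V.A1
  rw [compl_top] at h
  exact V.A3 le_rfl h bot_le

lemma prec_sup' (V : DeVries B) {a b c : B} (h1 : V.prec a c) (h2 : V.prec b c) :
    V.prec (a ⊔ b) c := by
  have h := V.A4 (V.A5 h1) (V.A5 h2)
  rw [← compl_sup] at h
  have h' := V.A5 h
  rwa [compl_compl, compl_compl] at h'

/-- Every nonzero element belongs to some concordant filter. -/
lemma exists_concordant (V : DeVries B) {x : B} (hx : x ≠ ⊥) :
    ∃ F : SV V, x ∈ F.1 := by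
  choose f hf1 hf2 using fun (p : {y : B // y ≠ ⊥}) => V.A7 p.2
  let g : ℕ → {y : B // y ≠ ⊥} := fun n => Nat.rec ⟨x, hx⟩ (fun _ p => ⟨f p, hf1 p⟩) n
  have hg : ∀ n, V.prec (g (n + 1)).1 (g n).1 := fun n => hf2 (g n)
  have hanti : Antitone (fun n => (g n).1) := antitone_nat_of_succ_le fun n => V.A2 (hg n)
  refine ⟨⟨{y | ∃ n, (g n).1 ≤ y}, ⟨⟨⟨0, le_top⟩, ?_, ?_, ?_⟩, ?_⟩⟩, ⟨0, le_rfl⟩⟩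
  · rintro ⟨n, hn⟩
    exact (g n).2 (le_bot_iff.mp hn)
  · rintro u v ⟨n, hn⟩ huv
    exact ⟨n, hn.trans huv⟩
  · rintro u v ⟨n, hn⟩ ⟨m, hm⟩
    exact ⟨max n m, le_inf ((hanti (le_max_left n m)).trans hn)
      ((hanti (le_max_right n m)).trans hm)⟩
  · rintro u ⟨n, hn⟩
    exact ⟨(g (n + 1)).1, ⟨n + 1, le_rfl⟩, V.A3 le_rfl (hg n) hn⟩

/-- Every open set containing `F` contains a basic open `hatt c` with `c ∈ F`. -/
lemma exists_basic_gen (V : DeVries B) {U : Set (SV V)}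
    (hU : TopologicalSpace.GenerateOpen {U : Set (SV V) | ∃ a : B, U = hatt V a} U) :
    ∀ F : SV V, F ∈ U → ∃ c ∈ F.1, hatt V c ⊆ U := by
  induction hU with
  | basic U hU =>
    obtain ⟨c, rfl⟩ := hU
    exact fun F hF => ⟨c, hF, subset_rfl⟩
  | univ => exact fun F _ => ⟨⊤, F.2.1.1, Set.subset_univ _⟩
  | inter U W _ _ ihU ihW =>
    intro F hF
    obtain ⟨c, hc, hcs⟩ := ihU F hF.1
    obtain ⟨c', hc', hcs'⟩ := ihW F hF.2
    refine ⟨c ⊓ c', F.2.1.2.2.2 c c' hc hc', fun G hG => ?_⟩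
    exact ⟨hcs (G.2.1.2.2.1 _ c hG inf_le_left), hcs' (G.2.1.2.2.1 _ c' hG inf_le_right)⟩
  | sUnion S _ ih =>
    rintro F ⟨t, ht, hFt⟩
    obtain ⟨c, hc, hcs⟩ := ih t ht F hFt
    exact ⟨c, hc, hcs.trans (Set.subset_sUnion_of_mem ht)⟩

lemma exists_basic (V : DeVries B) {U : Set (SV V)} (hU : IsOpen U) :
    ∀ F : SV V, F ∈ U → ∃ c ∈ F.1, hatt V c ⊆ U :=
  exists_basic_gen V hU

theorem stmt7 (V : DeVries B) (a b : B) :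
    V.prec a b ↔ closure (hatt V a) ⊆ dclF V (hatt V b) := by
  constructor
  · intro hab F hF
    have key : ∀ c ∈ F.1, a ⊓ c ≠ ⊥ := by
      intro c hc h0
      have hopen : IsOpen (hatt V c) :=
        TopologicalSpace.GenerateOpen.basic _ ⟨c, rfl⟩
      obtain ⟨G, hGc, hGa⟩ := mem_closure_iff.mp hF _ hopen hc
      have : a ⊓ c ∈ G.1 := G.2.1.2.2.2 a c hGa hGc
      rw [h0] at this
      exact G.2.1.2.1 this
    have haT : V.prec a ⊤ := V.A3 le_rfl hab le_top
    refine ⟨⟨{y | ∃ c ∈ F.1, ∃ d, V.prec a d ∧ c ⊓ d ≤ y}, ⟨⟨?_, ?_, ?_, ?_⟩, ?_⟩⟩,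
      ⟨⊤, F.2.1.1, b, hab, le_trans inf_le_right le_rfl⟩, ?_⟩
    · exact ⟨⊤, F.2.1.1, ⊤, haT, le_top⟩
    · rintro ⟨c, hc, d, had, hle⟩
      have : a ⊓ c ≤ ⊥ := le_trans (inf_le_inf_right c (V.A2 had)) (by rwa [inf_comm] at hle)
      exact key c hc (le_bot_iff.mp this)
    · rintro u v ⟨c, hc, d, had, hle⟩ huv
      exact ⟨c, hc, d, had, hle.trans huv⟩
    · rintro u v ⟨c, hc, d, had, hle⟩ ⟨c', hc', d', had', hle'⟩
      refine ⟨c ⊓ c', F.2.1.2.2.2 c c' hc hc', d ⊓ d', V.A4 had had', ?_⟩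
      calc (c ⊓ c') ⊓ (d ⊓ d') = (c ⊓ d) ⊓ (c' ⊓ d') := by ac_rfl
        _ ≤ u ⊓ v := inf_le_inf hle hle'
    · rintro u ⟨c, hc, d, had, hle⟩
      obtain ⟨c', hc', hcc'⟩ := F.2.2 c hc
      obtain ⟨d', had', hdd'⟩ := V.A6 had
      refine ⟨c' ⊓ d', ⟨c', hc', d', had', le_rfl⟩, ?_⟩
      have h1 : V.prec (c' ⊓ d') (c ⊓ d) :=
        V.A4 (V.A3 inf_le_left hcc' le_rfl) (V.A3 inf_le_right hdd' le_rfl)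
      exact V.A3 le_rfl h1 hle
    · intro c hc
      exact ⟨c, hc, b, hab, inf_le_left⟩
  · intro h
    by_contra hab
    set F : Set B := {c | ∃ d, V.prec d b ∧ dᶜ ≤ c} with hFdef
    have hFconc : Concordant V F := by
      refine ⟨⟨⟨⊥, prec_bot' V b, le_top⟩, ?_, ?_, ?_⟩, ?_⟩
      · rintro ⟨d, hdb, hdc⟩
        have : d = ⊤ := by
          have := le_bot_iff.mp hdc
          simpa [compl_eq_bot] using this
        subst this
        exact hab (V.A3 le_top hdb le_rfl)
      · rintro u v ⟨d, hdb, hdc⟩ huv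
        exact ⟨d, hdb, hdc.trans huv⟩
      · rintro u v ⟨d, hdb, hdc⟩ ⟨d', hdb', hdc'⟩
        refine ⟨d ⊔ d', prec_sup' V hdb hdb', ?_⟩
        rw [compl_sup]
        exact le_inf (inf_le_left.trans hdc) (inf_le_right.trans hdc')
      · rintro c ⟨d, hdb, hdc⟩
        obtain ⟨m, hdm, hmb⟩ := V.A6 hdb
        exact ⟨mᶜ, ⟨m, hmb, le_rfl⟩, V.A3 le_rfl (V.A5 hdm) hdc⟩
    have hFcl : (⟨F, hFconc⟩ : SV V) ∈ closure (hatt V a) := by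
      refine (@mem_closure_iff (SV V) (instTopSV V) _ _).mpr fun U hU hFU => ?_
      obtain ⟨c, hcF, hsub⟩ := exists_basic V hU _ hFU
      obtain ⟨d, hdb, hdc⟩ := hcF
      have hne : a ⊓ dᶜ ≠ ⊥ := by
        intro h0
        have : a ≤ d := by
          rwa [← sdiff_eq, sdiff_eq_bot_iff] at h0
        exact hab (V.A3 this hdb le_rfl)
      obtain ⟨G, hG⟩ := exists_concordant V hne
      refine ⟨G, hsub ?_, ?_⟩
      · exact G.2.1.2.2.1 _ c hG (le_trans inf_le_right hdc)
      · exact G.2.1.2.2.1 _ a hG inf_le_left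
    obtain ⟨G, hGb, hFG⟩ := h hFcl
    obtain ⟨d, hdG, hdb⟩ := G.2.2 b hGb
    have hdc : dᶜ ∈ G.1 := hFG ⟨d, hdb, le_rfl⟩
    have : d ⊓ dᶜ ∈ G.1 := G.2.1.2.2.2 d dᶜ hdG hdc
    rw [inf_compl_eq_bot] at this
    exact G.2.1.2.1 this
end

section
/- Let h : V1 → V2 be a de Vries morphism between de Vries algebras. For any concordant filter F on V2, the set ↠(h⁻¹[F]) = {a : ∃b ≺₁ a, h(b) ∈ F} is a concordant filter on V1. -/
variable {B : Type*} [CompleteBooleanAlgebra B]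

/-- A de Vries morphism between de Vries algebras. -/
structure DeVriesMor {B₁ B₂ : Type*} [CompleteBooleanAlgebra B₁] [CompleteBooleanAlgebra B₂]
    (V₁ : DeVries B₁) (V₂ : DeVries B₂) where
  toFun : B₁ → B₂
  mV1 : toFun ⊥ = ⊥
  mV2 : ∀ a b : B₁, toFun (a ⊓ b) = toFun a ⊓ toFun b
  mV3 : ∀ a b : B₁, V₁.prec a b → V₂.prec (toFun aᶜ)ᶜ (toFun b)
  mV4 : ∀ a : B₁, toFun a = sSup {x : B₂ | ∃ b : B₁, V₁.prec b a ∧ x = toFun b}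

theorem stmt16 {B₁ B₂ : Type*} [CompleteBooleanAlgebra B₁] [CompleteBooleanAlgebra B₂]
    (V₁ : DeVries B₁) (V₂ : DeVries B₂) (h : DeVriesMor V₁ V₂)
    (F : Set B₂) (hF : Concordant V₂ F) :
    Concordant V₁ {a : B₁ | ∃ b : B₁, V₁.prec b a ∧ h.toFun b ∈ F} := by
  have htop : h.toFun ⊤ = ⊤ := by
    have := h.mV3 ⊤ ⊤ V₁.A1
    rw [compl_top, h.mV1, compl_bot] at this
    exact top_le_iff.mp (V₂.A2 this)
  obtain ⟨⟨hT, hB, hUp, hMeet⟩, hC⟩ := hF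
  refine ⟨⟨⟨⊤, V₁.A1, htop ▸ hT⟩, ?_, ?_, ?_⟩, ?_⟩
  · rintro ⟨b, hb, hbF⟩
    have : b = ⊥ := le_bot_iff.mp (V₁.A2 hb)
    rw [this, h.mV1] at hbF
    exact hB hbF
  · rintro a a' ⟨b, hb, hbF⟩ haa
    exact ⟨b, V₁.A3 le_rfl hb haa, hbF⟩
  · rintro a a' ⟨b, hb, hbF⟩ ⟨b', hb', hbF'⟩
    refine ⟨b ⊓ b', V₁.A4 (V₁.A3 inf_le_left hb le_rfl) (V₁.A3 inf_le_right hb' le_rfl), ?_⟩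
    rw [h.mV2]
    exact hMeet _ _ hbF hbF'
  · rintro a ⟨b, hb, hbF⟩
    obtain ⟨m, hbm, hma⟩ := V₁.A6 hb
    exact ⟨m, ⟨b, hbm, hbF⟩, hma⟩
end

section
/- Let h : V1 → V2 be a de Vries morphism. The induced map Λ(h) : S_{V2} → S_{V1}, F ↦ ↠(h⁻¹[F]), is continuous with respect to the Stone-like topologies; in fact Λ(h)⁻¹[â] = ⋃_{c ≺₁ a} (h(c))-hat for every a ∈ V1. -/
variable {B : Type*} [CompleteBooleanAlgebra B]

theorem stmt17 {B₂ : Type*} [CompleteBooleanAlgebra B₂]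
    (V₁ : DeVries B) (V₂ : DeVries B₂) (h : DeVriesMor V₁ V₂)
    (Λh : SV V₂ → SV V₁)
    (hΛ : ∀ F : SV V₂, (Λh F).1 = {a : B | ∃ b : B, V₁.prec b a ∧ h.toFun b ∈ F.1}) :
    (∀ a : B, Λh ⁻¹' hatt V₁ a = ⋃ c ∈ {c : B | V₁.prec c a}, hatt V₂ (h.toFun c)) ∧
    Continuous Λh := by
  have key : ∀ a : B, Λh ⁻¹' hatt V₁ a = ⋃ c ∈ {c : B | V₁.prec c a}, hatt V₂ (h.toFun c) := by
    intro a
    ext F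
    simp only [Set.mem_preimage, hatt, Set.mem_setOf_eq, Set.mem_iUnion, hΛ F]
    constructor
    · rintro ⟨b, hb, hbF⟩
      exact ⟨b, hb, hbF⟩
    · rintro ⟨b, hb, hbF⟩
      exact ⟨b, hb, hbF⟩
  refine ⟨key, ?_⟩
  apply continuous_generateFrom_iff.mpr
  rintro U ⟨a, rfl⟩
  rw [key a]
  apply isOpen_biUnion
  intro c _
  exact TopologicalSpace.isOpen_generateFrom_of_mem ⟨h.toFun c, rfl⟩
end

section
/- Let h : V1 → V2 be a de Vries morphism, F a concordant filter on V2 and G a concordant filter on V1 with ↠(h⁻¹[F]) ⊆ G. Then H = {a ∈ V2 : a ≥ ¬h(¬c) ∧ d for some c ∈ G, d ∈ F} is a concordant filter on V2 containing F, and G ⊆ ↠(h⁻¹[H]); i.e., Λ(h) is weakly dense. -/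
variable {B : Type*} [CompleteBooleanAlgebra B]

theorem stmt18 {B₁ B₂ : Type*} [CompleteBooleanAlgebra B₁] [CompleteBooleanAlgebra B₂]
    (V₁ : DeVries B₁) (V₂ : DeVries B₂) (h : DeVriesMor V₁ V₂)
    (F : Set B₂) (hF : Concordant V₂ F)
    (G : Set B₁) (hG : Concordant V₁ G)
    (hsub : {a : B₁ | ∃ b : B₁, V₁.prec b a ∧ h.toFun b ∈ F} ⊆ G) :
    Concordant V₂ {a : B₂ | ∃ c ∈ G, ∃ d ∈ F, (h.toFun cᶜ)ᶜ ⊓ d ≤ a} ∧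
    F ⊆ {a : B₂ | ∃ c ∈ G, ∃ d ∈ F, (h.toFun cᶜ)ᶜ ⊓ d ≤ a} ∧
    G ⊆ {a : B₁ | ∃ b : B₁, V₁.prec b a ∧
      h.toFun b ∈ {x : B₂ | ∃ c ∈ G, ∃ d ∈ F, (h.toFun cᶜ)ᶜ ⊓ d ≤ x}} := by
  obtain ⟨⟨hFtop, hFbot, hFup, hFmeet⟩, hFcon⟩ := hF
  obtain ⟨⟨hGtop, hGbot, hGup, hGmeet⟩, hGcon⟩ := hG
  have hmono : ∀ a b : B₁, a ≤ b → h.toFun a ≤ h.toFun b := by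
    intro a b hab
    have : h.toFun (a ⊓ b) = h.toFun a ⊓ h.toFun b := h.mV2 a b
    rw [inf_eq_left.2 hab] at this
    exact le_of_eq_of_le this inf_le_right
  have hdisj : ∀ c : B₁, h.toFun c ≤ (h.toFun cᶜ)ᶜ := by
    intro c
    have : h.toFun c ⊓ h.toFun cᶜ = ⊥ := by
      rw [← h.mV2, inf_compl_eq_bot, h.mV1]
    exact le_compl_iff_disjoint_right.2 (disjoint_iff.2 this)
  refine ⟨⟨⟨⟨⊤, hGtop, ⊤, hFtop, le_top⟩, ?_, ?_, ?_⟩, ?_⟩, ?_, ?_⟩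
  · -- ⊥ ∉ H
    rintro ⟨c, hcG, d, hdF, hle⟩
    have hdh : d ≤ h.toFun cᶜ := by
      have hd : Disjoint d ((h.toFun cᶜ)ᶜ) :=
        (disjoint_iff_inf_le.2 (by rwa [inf_comm] at hle)).symm.symm
      have := le_compl_iff_disjoint_right.2 hd
      rwa [compl_compl] at this
    have hhF : h.toFun cᶜ ∈ F := hFup d _ hdF hdh
    obtain ⟨c', hc'G, hc'c⟩ := hGcon c hcG
    have : c'ᶜ ∈ G := hsub ⟨cᶜ, V₁.A5 hc'c, hhF⟩
    have hbotG : (⊥ : B₁) ∈ G := by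
      have := hGmeet c' c'ᶜ hc'G this
      rwa [inf_compl_eq_bot] at this
    exact hGbot hbotG
  · -- upward closed
    rintro a b ⟨c, hcG, d, hdF, hle⟩ hab
    exact ⟨c, hcG, d, hdF, hle.trans hab⟩
  · -- meets
    rintro a b ⟨c₁, hc₁, d₁, hd₁, hle₁⟩ ⟨c₂, hc₂, d₂, hd₂, hle₂⟩
    refine ⟨c₁ ⊓ c₂, hGmeet _ _ hc₁ hc₂, d₁ ⊓ d₂, hFmeet _ _ hd₁ hd₂, ?_⟩
    have h1 : (h.toFun (c₁ ⊓ c₂)ᶜ)ᶜ ≤ (h.toFun c₁ᶜ)ᶜ :=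
      compl_le_compl (hmono _ _ (compl_le_compl inf_le_left))
    have h2 : (h.toFun (c₁ ⊓ c₂)ᶜ)ᶜ ≤ (h.toFun c₂ᶜ)ᶜ :=
      compl_le_compl (hmono _ _ (compl_le_compl inf_le_right))
    calc (h.toFun (c₁ ⊓ c₂)ᶜ)ᶜ ⊓ (d₁ ⊓ d₂)
        ≤ ((h.toFun c₁ᶜ)ᶜ ⊓ d₁) ⊓ ((h.toFun c₂ᶜ)ᶜ ⊓ d₂) :=
          le_inf (inf_le_inf (by exact h1) inf_le_left)
                 (inf_le_inf (by exact h2) inf_le_right)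
      _ ≤ a ⊓ b := inf_le_inf hle₁ hle₂
  · -- concordance of H
    rintro a ⟨c, hcG, d, hdF, hle⟩
    obtain ⟨c', hc'G, hc'c⟩ := hGcon c hcG
    obtain ⟨d', hd'F, hd'd⟩ := hFcon d hdF
    refine ⟨(h.toFun c'ᶜ)ᶜ ⊓ d', ⟨c', hc'G, d', hd'F, le_refl _⟩, ?_⟩
    have hp : V₂.prec ((h.toFun c'ᶜ)ᶜ) ((h.toFun cᶜ)ᶜ) :=
      V₂.A3 (le_refl _) (h.mV3 c' c hc'c) ((hdisj c))
    have hq : V₂.prec ((h.toFun c'ᶜ)ᶜ ⊓ d') ((h.toFun cᶜ)ᶜ ⊓ d) :=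
      V₂.A4 (V₂.A3 inf_le_left hp (le_refl _)) (V₂.A3 inf_le_right hd'd (le_refl _))
    exact V₂.A3 (le_refl _) hq hle
  · -- F ⊆ H
    intro d hdF
    exact ⟨⊤, hGtop, d, hdF, inf_le_right⟩
  · -- G ⊆ ↠ h⁻¹[H]
    intro a haG
    obtain ⟨b, hbG, hba⟩ := hGcon a haG
    obtain ⟨c, hcG, hcb⟩ := hGcon b hbG
    refine ⟨b, hba, c, hcG, ⊤, hFtop, ?_⟩
    have := V₂.A2 (h.mV3 c b hcb)
    simpa using this
end

section
/- Let L be a compact regular frame. For all a, c ∈ L − {1}: a ∨ c = 1 if and only if there exists b ≺ a with ¬b ≺ c (where ≺ is the rather-below relation). Equivalently, the upper Vietoris topology on L − {1} generated by the sets □a = {b : a ∨ b = 1} coincides with the topology generated by the sets ǎ = {b : ¬a ≺ b}. -/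
/-- The rather-below relation in a frame: `a ≺ b` iff `b ⊔ ¬a = ⊤`,
where `¬a` is the pseudo-complement (Heyting complement). -/
def RatherBelow {L : Type*} [Order.Frame L] (a b : L) : Prop := b ⊔ aᶜ = ⊤

/-- A compact frame: every subset with join `⊤` has a finite subset with join `⊤`. -/
def CompactFrame (L : Type*) [Order.Frame L] : Prop :=
  ∀ S : Set L, sSup S = ⊤ → ∃ T ⊆ S, T.Finite ∧ sSup T = ⊤

/-- A regular frame: every element is the join of the elements rather below it. -/
def RegularFrame (L : Type*) [Order.Frame L] : Prop :=
  ∀ a : L, a = sSup {b : L | RatherBelow b a}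

lemma ratherBelow_sSup_finite {L : Type*} [Order.Frame L] (a : L) :
    ∀ T : Set L, T.Finite → (∀ x ∈ T, RatherBelow x a) → RatherBelow (sSup T) a := by
  intro T hT
  refine Set.Finite.induction_on (motive := fun T _ =>
    (∀ x ∈ T, RatherBelow x a) → RatherBelow (sSup T) a) T hT ?_ ?_
  · intro _; simp [RatherBelow]
  · intro x T hx hTfin ih h
    have h1 : RatherBelow x a := h x (Set.mem_insert _ _)
    have h2 : RatherBelow (sSup T) a := ih fun y hy => h y (Set.mem_insert_of_mem _ hy)
    unfold RatherBelow at *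
    rw [sSup_insert, compl_sup, sup_inf_left, h1, h2, inf_top_eq]

theorem stmt19 {L : Type*} [Order.Frame L]
    (hc : CompactFrame L) (hr : RegularFrame L)
    (a c : L) (ha : a ≠ ⊤) (hcne : c ≠ ⊤) :
    a ⊔ c = ⊤ ↔ ∃ b : L, RatherBelow b a ∧ RatherBelow bᶜ c := by
  constructor
  · intro h
    have hS : sSup ({c} ∪ {b : L | RatherBelow b a}) = ⊤ := by
      rw [Set.union_comm, sSup_union, sSup_singleton, ← hr a, h]
    obtain ⟨T, hTsub, hTfin, hTtop⟩ := hc _ hS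
    refine ⟨sSup (T \ {c}), ?_, ?_⟩
    · apply ratherBelow_sSup_finite a _ (hTfin.diff)
      intro x hx
      rcases hTsub hx.1 with h1 | h1
      · exact absurd h1 hx.2
      · exact h1
    · have hle : sSup T ≤ c ⊔ sSup (T \ {c}) := by
        apply sSup_le
        intro x hx
        by_cases hxc : x = c
        · exact hxc ▸ le_sup_left
        · exact le_sup_of_le_right (le_sSup ⟨hx, hxc⟩)
      have h2 : c ⊔ sSup (T \ {c}) = ⊤ := top_le_iff.mp (hTtop ▸ hle)
      have h3 : c ⊔ sSup (T \ {c}) ≤ c ⊔ (sSup (T \ {c}))ᶜᶜ :=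
        sup_le_sup_left le_compl_compl _
      exact top_le_iff.mp (h2 ▸ h3)
  · rintro ⟨b, hb1, hb2⟩
    unfold RatherBelow at hb1 hb2
    have : (a ⊔ bᶜ) ⊓ (c ⊔ bᶜᶜ) ≤ a ⊔ c := by
      rw [inf_sup_left]
      refine sup_le (inf_le_right.trans le_sup_right) ?_
      have h2 : bᶜ ⊓ bᶜᶜ = (⊥ : L) := by simp
      rw [inf_sup_right, h2, sup_bot_eq]
      exact le_sup_of_le_left inf_le_left
    rw [hb1, hb2, inf_top_eq] at this
    exact top_le_iff.mp this
end
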